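/- Let G be a finite group, let H be a normal subgroup of G, and let H^⊥ denote the set of complements of H in the subgroup lattice of G. Then μ(⊥, G) = Σ_{K ∈ H^⊥} μ(⊥, K) · μ(K, G), where ⊥ denotes the trivial subgroup. -/

import Mathlib

open Finset
open scoped Pointwise

/-- The Möbius function of the subgroup lattice of a finite group `G`,
evaluated at a pair of subgroups. -/
noncomputable def subgroupMu (G : Type*) [Group G] [Finite G] (H K : Subgroup G) : ℤ :=
  letI : Fintype (Subgroup G) := Fintype.ofFinite _
  letI : DecidableEq (Subgroup G) := Classical.decEq _
  letI : @DecidableRel (Subgroup G) (Subgroup G) (· < ·) := Classical.decRel _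
  letI : @DecidableRel (Subgroup G) (Subgroup G) (· ≤ ·) := Classical.decRel _
  letI := Fintype.toLocallyFiniteOrder (α := Subgroup G)
  IncidenceAlgebra.mu ℤ H K

/-- The Möbius number of a finite group `G`: the value `μ(⊥, ⊤)` of the Möbius
function of its lattice of subgroups. -/
noncomputable def muGrp (G : Type*) [Group G] [Finite G] : ℤ :=
  subgroupMu G ⊥ ⊤

noncomputable instance fintypeSubgroupOfFinite (G : Type*) [Group G] [Finite G] :
    Fintype (Subgroup G) := Fintype.ofFinite _

section CrapoAbstract

open IncidenceAlgebra
open scoped Classical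

variable {α : Type*} [Lattice α] [BoundedOrder α] [Fintype α] [DecidableEq α]
  [LocallyFiniteOrder α]

private lemma deltaA (u : α) :
    ∑ x : α, (if x ≤ u then mu ℤ ⊥ x else 0) = if u = ⊥ then 1 else 0 := by
  have h : ∑ x ∈ Icc (⊥ : α) u, mu ℤ ⊥ x = if (⊥ : α) = u then 1 else 0 :=
    sum_Icc_mu_right _ _
  have hf : Finset.univ.filter (fun x : α => x ≤ u) = Icc ⊥ u := by
    ext x; simp
  rw [← Finset.sum_filter, hf, h]
  simp [eq_comm]

private lemma deltaB (v : α) :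
    ∑ w : α, (if v ≤ w then mu ℤ w ⊤ else 0) = if v = ⊤ then 1 else 0 := by
  have h : ∑ x ∈ Icc v (⊤ : α), mu ℤ x ⊤ = if v = (⊤ : α) then 1 else 0 :=
    sum_Icc_mu_left _ _
  have hf : Finset.univ.filter (fun w : α => v ≤ w) = Icc v ⊤ := by
    ext x; simp
  rw [← Finset.sum_filter, hf, h]

/-- Weisner-type identity. -/
private lemma weisnerW (z : α) :
    ∑ x : α, (if x ⊔ z = ⊤ then mu ℤ ⊥ x else 0) = if z = ⊥ then mu ℤ (⊥ : α) ⊤ else 0 := by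
  calc ∑ x : α, (if x ⊔ z = ⊤ then mu ℤ ⊥ x else 0)
      = ∑ x : α, ∑ w : α, (if x ≤ w ∧ z ≤ w then mu ℤ ⊥ x * mu ℤ w ⊤ else 0) := by
        refine Finset.sum_congr rfl fun x _ => ?_
        have : (if x ⊔ z = ⊤ then mu ℤ ⊥ x else 0)
            = mu ℤ ⊥ x * (if x ⊔ z = ⊤ then 1 else 0) := by
          split_ifs <;> simp
        rw [this, ← deltaB (x ⊔ z), Finset.mul_sum]
        refine Finset.sum_congr rfl fun w _ => ?_
        simp only [sup_le_iff, mul_ite, mul_zero]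
    _ = ∑ w : α, ∑ x : α, (if x ≤ w ∧ z ≤ w then mu ℤ ⊥ x * mu ℤ w ⊤ else 0) :=
        Finset.sum_comm
    _ = ∑ w : α, (if z ≤ w then (∑ x : α, (if x ≤ w then mu ℤ ⊥ x else 0)) * mu ℤ w ⊤ else 0) := by
        refine Finset.sum_congr rfl fun w _ => ?_
        by_cases hz : z ≤ w
        · simp only [hz, and_true, if_true, Finset.sum_mul, ite_mul, zero_mul]
        · simp [hz]
    _ = ∑ w : α, (if w = ⊥ then (if z = ⊥ then mu ℤ (⊥ : α) ⊤ else 0) else 0) := by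
        refine Finset.sum_congr rfl fun w _ => ?_
        rw [deltaA]
        by_cases hw : w = ⊥
        · subst hw
          by_cases hz : z ≤ ⊥
          · simp [hz, le_bot_iff.mp hz]
          · have hz' : z ≠ ⊥ := fun h => hz (le_of_eq h)
            simp [hz, hz']
        · simp [hw]
    _ = if z = ⊥ then mu ℤ (⊥ : α) ⊤ else 0 := by
        rw [Finset.sum_eq_single_of_mem (⊥ : α) (Finset.mem_univ _) (fun w _ hw => if_neg hw)]
        rw [if_pos rfl]

/-- collapse of the `y`-sum. -/
private lemma sumR (a x : α) :
    ∑ y : α, (if x ≤ y ∧ a ⊓ y = ⊥ then mu ℤ y ⊤ else 0)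
      = ∑ z : α, (if z ≤ a ∧ x ⊔ z = ⊤ then mu ℤ ⊥ z else 0) := by
  calc ∑ y : α, (if x ≤ y ∧ a ⊓ y = ⊥ then mu ℤ y ⊤ else 0)
      = ∑ y : α, ∑ z : α, (if z ≤ a ∧ x ≤ y ∧ z ≤ y then mu ℤ ⊥ z * mu ℤ y ⊤ else 0) := by
        refine Finset.sum_congr rfl fun y _ => ?_
        have : (if x ≤ y ∧ a ⊓ y = ⊥ then mu ℤ y ⊤ else 0)
            = (if x ≤ y then ((if a ⊓ y = ⊥ then (1 : ℤ) else 0) * mu ℤ y ⊤) else 0) := by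
          by_cases h1 : x ≤ y <;> by_cases h2 : a ⊓ y = ⊥ <;> simp [h1, h2]
        rw [this, ← deltaA (a ⊓ y)]
        by_cases h1 : x ≤ y
        · simp only [h1, if_true, true_and, Finset.sum_mul, ite_mul, zero_mul]
          refine Finset.sum_congr rfl fun z _ => ?_
          by_cases hz : z ≤ a <;> by_cases hzy : z ≤ y <;> simp [hz, hzy, h1, le_inf_iff]
        · simp [h1]
    _ = ∑ z : α, ∑ y : α, (if z ≤ a ∧ x ≤ y ∧ z ≤ y then mu ℤ ⊥ z * mu ℤ y ⊤ else 0) :=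
        Finset.sum_comm
    _ = ∑ z : α, (if z ≤ a then mu ℤ ⊥ z * ∑ y : α, (if x ⊔ z ≤ y then mu ℤ y ⊤ else 0) else 0) := by
        refine Finset.sum_congr rfl fun z _ => ?_
        by_cases hz : z ≤ a
        · simp only [hz, true_and, if_true, Finset.mul_sum]
          refine Finset.sum_congr rfl fun y _ => ?_
          simp only [sup_le_iff]
          by_cases h : x ≤ y ∧ z ≤ y <;> simp [h]
        · simp [hz]
    _ = ∑ z : α, (if z ≤ a ∧ x ⊔ z = ⊤ then mu ℤ ⊥ z else 0) := by
        refine Finset.sum_congr rfl fun z _ => ?_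
        rw [deltaB]
        by_cases hz : z ≤ a <;> by_cases h : x ⊔ z = ⊤ <;> simp [hz, h]

private theorem crapo_abs (a : α)
    [DecidablePred fun K : α => a ⊓ K = ⊥ ∧ a ⊔ K = ⊤]
    (hmod : ∀ x y : α, x ≤ y → a ⊔ x = ⊤ → a ⊓ y = ⊥ → x = y) :
    IncidenceAlgebra.mu ℤ (⊥ : α) (⊤ : α) =
      ∑ K ∈ Finset.univ.filter (fun K : α => a ⊓ K = ⊥ ∧ a ⊔ K = ⊤),
        IncidenceAlgebra.mu ℤ ⊥ K * IncidenceAlgebra.mu ℤ K ⊤ := by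
  have main : ∑ x : α, ∑ y : α,
      (if x ≤ y ∧ a ⊔ x = ⊤ ∧ a ⊓ y = ⊥ then mu ℤ ⊥ x * mu ℤ y ⊤ else 0) = mu ℤ (⊥ : α) ⊤ := by
    calc ∑ x : α, ∑ y : α, (if x ≤ y ∧ a ⊔ x = ⊤ ∧ a ⊓ y = ⊥ then mu ℤ ⊥ x * mu ℤ y ⊤ else 0)
        = ∑ x : α, (if a ⊔ x = ⊤ then mu ℤ ⊥ x *
            ∑ y : α, (if x ≤ y ∧ a ⊓ y = ⊥ then mu ℤ y ⊤ else 0) else 0) := by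
          refine Finset.sum_congr rfl fun x _ => ?_
          by_cases hx : a ⊔ x = ⊤
          · simp only [hx, true_and, if_true, Finset.mul_sum]
            refine Finset.sum_congr rfl fun y _ => ?_
            by_cases h : x ≤ y ∧ a ⊓ y = ⊥ <;> simp [h, hx]
          · refine Eq.trans (Finset.sum_eq_zero fun y _ => ?_) (by simp [hx])
            simp [hx]
      _ = ∑ x : α, (if a ⊔ x = ⊤ then mu ℤ ⊥ x *
            ∑ z : α, (if z ≤ a ∧ x ⊔ z = ⊤ then mu ℤ ⊥ z else 0) else 0) := by
          refine Finset.sum_congr rfl fun x _ => ?_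
          rw [sumR a x]
      _ = ∑ x : α, ∑ z : α, (if z ≤ a ∧ x ⊔ z = ⊤ then mu ℤ ⊥ x * mu ℤ ⊥ z else 0) := by
          refine Finset.sum_congr rfl fun x _ => ?_
          by_cases hx : a ⊔ x = ⊤
          · simp only [hx, if_true, Finset.mul_sum]
            refine Finset.sum_congr rfl fun z _ => ?_
            by_cases h : z ≤ a ∧ x ⊔ z = ⊤ <;> simp [h]
          · refine Eq.trans (by simp [hx]) (Finset.sum_eq_zero fun z _ => ?_).symm
            by_cases h : z ≤ a ∧ x ⊔ z = ⊤
            · exfalso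
              apply hx
              have h1 : (⊤ : α) ≤ x ⊔ a := by
                rw [← h.2]
                exact sup_le_sup_left h.1 x
              rw [sup_comm]
              exact top_le_iff.mp h1
            · simp [h]
      _ = ∑ z : α, ∑ x : α, (if z ≤ a ∧ x ⊔ z = ⊤ then mu ℤ ⊥ x * mu ℤ ⊥ z else 0) :=
          Finset.sum_comm
      _ = ∑ z : α, (if z ≤ a then (∑ x : α, (if x ⊔ z = ⊤ then mu ℤ ⊥ x else 0)) * mu ℤ ⊥ z else 0) := by
          refine Finset.sum_congr rfl fun z _ => ?_
          by_cases hz : z ≤ a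
          · simp only [hz, true_and, if_true, Finset.sum_mul, ite_mul, zero_mul]
          · simp [hz]
      _ = ∑ z : α, (if z = ⊥ then mu ℤ (⊥ : α) (⊤ : α) else 0) := by
          refine Finset.sum_congr rfl fun z _ => ?_
          rw [weisnerW]
          by_cases hz : z = ⊥
          · simp [hz, bot_le.trans_eq rfl, hz ▸ (bot_le : (⊥ : α) ≤ a)]
          · simp [hz]
      _ = mu ℤ (⊥ : α) ⊤ := by
          simp
  rw [Finset.sum_filter]
  calc (mu ℤ (⊥ : α) (⊤ : α) : ℤ)
      = ∑ x : α, ∑ y : α, (if x ≤ y ∧ a ⊔ x = ⊤ ∧ a ⊓ y = ⊥ then mu ℤ ⊥ x * mu ℤ y ⊤ else 0) :=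
        main.symm
    _ = ∑ x : α, ∑ y : α, (if y = x ∧ (a ⊓ x = ⊥ ∧ a ⊔ x = ⊤) then mu ℤ ⊥ x * mu ℤ y ⊤ else 0) := by
        refine Finset.sum_congr rfl fun x _ => Finset.sum_congr rfl fun y _ => ?_
        refine if_congr ?_ rfl rfl
        constructor
        · rintro ⟨hxy, hsup, hinf⟩
          have hx : x = y := hmod x y hxy hsup hinf
          subst hx
          exact ⟨rfl, hinf, hsup⟩
        · rintro ⟨rfl, hinf, hsup⟩
          exact ⟨le_refl _, hsup, hinf⟩
    _ = ∑ x : α, (if a ⊓ x = ⊥ ∧ a ⊔ x = ⊤ then mu ℤ ⊥ x * mu ℤ x ⊤ else 0) := by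
        refine Finset.sum_congr rfl fun x _ => ?_
        have h : ∀ y : α, (if y = x ∧ (a ⊓ x = ⊥ ∧ a ⊔ x = ⊤) then mu ℤ ⊥ x * mu ℤ y ⊤ else 0)
            = (if y = x then (if a ⊓ x = ⊥ ∧ a ⊔ x = ⊤ then mu ℤ ⊥ x * mu ℤ y ⊤ else 0) else 0) := by
          intro y
          by_cases hy : y = x <;> simp [hy]
        rw [Finset.sum_congr rfl fun y _ => h y]
        simp

end CrapoAbstract

open scoped Classical in
/-- Crapo's complement theorem for a normal subgroup of a finite group. -/
theorem crapo_normal_subgroup {G : Type*} [Group G] [Finite G]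
    (H : Subgroup G) (hH : H.Normal) :
    subgroupMu G ⊥ ⊤ =
      ∑ K ∈ Finset.univ.filter (fun K : Subgroup G => H ⊓ K = ⊥ ∧ H ⊔ K = ⊤),
        subgroupMu G ⊥ K * subgroupMu G K ⊤ := by
  letI : Fintype (Subgroup G) := Fintype.ofFinite _
  letI : DecidableEq (Subgroup G) := Classical.decEq _
  letI : @DecidableRel (Subgroup G) (Subgroup G) (· < ·) := Classical.decRel _
  letI : @DecidableRel (Subgroup G) (Subgroup G) (· ≤ ·) := Classical.decRel _
  letI := Fintype.toLocallyFiniteOrder (α := Subgroup G)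
  have hmod : ∀ x y : Subgroup G, x ≤ y → H ⊔ x = ⊤ → H ⊓ y = ⊥ → x = y := by
    intro x y hxy hsup hinf
    refine le_antisymm hxy fun g hg => ?_
    have hgHx : (g : G) ∈ (H : Set G) * (x : Set G) := by
      rw [← Subgroup.normal_mul H x, hsup]
      simp
    obtain ⟨h, hh, k, hk, hmul⟩ := hgHx
    have hh' : h ∈ H := hh
    have hk' : k ∈ x := hk
    have hmul' : h * k = g := hmul
    have hy2 : h ∈ y := by
      have hhe : h = g * k⁻¹ := by rw [← hmul']; group
      rw [hhe]
      exact mul_mem hg (inv_mem (hxy hk'))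
    have hhy : h ∈ H ⊓ y := Subgroup.mem_inf.mpr ⟨hh', hy2⟩
    rw [hinf, Subgroup.mem_bot] at hhy
    rw [hhy, one_mul] at hmul'
    rw [← hmul']
    exact hk'
  exact crapo_abs H hmod
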